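/- Let S be a finite sequence over the alphabet {1,...,k} ∪ {B}, let j ∈ {1,...,k}, and let S' be the sequence obtained from S by deleting all occurrences of j. Then the total weight of S' equals the total weight of S minus the output of j plus the input of j, where output of j is the sum of weights of neighbor pairs of j's, and input of j is the sum over all neighbor pairs of symbols i ≠ j having j strictly between them of 1/(b(b-1)), b being the number of distinct symbols strictly between that pair (assume each such pair has b ≥ 2). -/

import Mathlib

open scoped Classical
open Finset

noncomputable section

/-- Entry of the sequence at position `t` (`none` = blank `B`, out-of-range reads `none`). -/
def seqGet {k : ℕ} (S : List (Option (Fin k))) (t : ℕ) : Option (Fin k) := S.getD t none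

/-- `t1 < t2` are neighbors: both equal to some number `i` with no `i` strictly in between. -/
def IsNbr {k : ℕ} (S : List (Option (Fin k))) (t1 t2 : ℕ) : Prop :=
  t1 < t2 ∧ t2 < S.length ∧ ∃ i : Fin k, seqGet S t1 = some i ∧ seqGet S t2 = some i ∧
    ∀ t, t1 < t → t < t2 → seqGet S t ≠ some i

/-- The set of distinct symbols appearing strictly between positions `t1` and `t2`. -/
def between {k : ℕ} (S : List (Option (Fin k))) (t1 t2 : ℕ) : Finset (Option (Fin k)) :=
  (Finset.Ioo t1 t2).image (seqGet S)

/-- Weight of a pair: `1/b` where `b` is the number of distinct symbols in between (`0` if `b = 0`). -/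
def wt {k : ℕ} (S : List (Option (Fin k))) (t1 t2 : ℕ) : ℝ :=
  ((between S t1 t2).card : ℝ)⁻¹

/-- Total weight: the sum of weights of all neighbor pairs. -/
def totalWeight {k : ℕ} (S : List (Option (Fin k))) : ℝ :=
  ∑ p ∈ (Finset.range S.length ×ˢ Finset.range S.length).filter
      (fun p => IsNbr S p.1 p.2), wt S p.1 p.2

/-- The number of occurrences of the blank symbol `B` in the sequence. -/
def numBlanks {k : ℕ} (S : List (Option (Fin k))) : ℕ :=
  (S.filter (fun x => x = none)).length

/-- Permissibility: consecutive numeric entries are weakly increasing. -/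
def Permissible {k : ℕ} (S : List (Option (Fin k))) : Prop :=
  ∀ t (i j : Fin k), seqGet S t = some i → seqGet S (t + 1) = some j → i ≤ j

/-- A neighbor pair whose common symbol is `i`. -/
def NbrOf {k : ℕ} (S : List (Option (Fin k))) (i : Fin k) (t1 t2 : ℕ) : Prop :=
  IsNbr S t1 t2 ∧ seqGet S t1 = some i

/-- Output of `i`: the sum of the weights of all neighbor pairs of `i`'s. -/
def output {k : ℕ} (S : List (Option (Fin k))) (i : Fin k) : ℝ :=
  ∑ p ∈ (Finset.range S.length ×ˢ Finset.range S.length).filter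
      (fun p => NbrOf S i p.1 p.2), wt S p.1 p.2

/-- Input of `i`: the sum over all neighbor pairs of other symbols containing `i` strictly in
between of `1/(b(b-1))`, `b` being the number of distinct symbols strictly between that pair. -/
def inputW {k : ℕ} (S : List (Option (Fin k))) (i : Fin k) : ℝ :=
  ∑ p ∈ (Finset.range S.length ×ˢ Finset.range S.length).filter
      (fun p => IsNbr S p.1 p.2 ∧ seqGet S p.1 ≠ some i ∧ some i ∈ between S p.1 p.2),
    (((between S p.1 p.2).card : ℝ) * (((between S p.1 p.2).card : ℝ) - 1))⁻¹

namespace FIdx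
variable {α : Type*} (q : α → Bool) (L : List α)

def f (t : ℕ) : ℕ := ((L.take t).filter q).length

variable {q L}

lemma f_mono {t t' : ℕ} (h : t ≤ t') : f q L t ≤ f q L t' := by
  have h1 : L.take t <+: L.take t' := by
    rw [show L.take t = (L.take t').take t by rw [List.take_take, min_eq_left h]]
    exact List.take_prefix _ _
  exact (h1.filter q).length_le

lemma f_length : f q L L.length = (L.filter q).length := by
  simp [f]

lemma f_le_length (t : ℕ) : f q L t ≤ (L.filter q).length := by
  rw [← f_length]
  rcases le_total t L.length with h | h
  · exact f_mono h
  · simp [f, List.take_of_length_le h]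

lemma take_succ_eq {t : ℕ} (ht : t < L.length) :
    L.take (t + 1) = L.take t ++ [L[t]] := by
  rw [List.take_succ, List.getElem?_eq_getElem ht]
  rfl

lemma f_succ_pos {t : ℕ} (ht : t < L.length) (hq : q L[t] = true) :
    f q L (t + 1) = f q L t + 1 := by
  unfold f
  rw [take_succ_eq ht, List.filter_append, List.length_append]
  simp [List.filter, hq]

lemma f_succ_neg' {t : ℕ} (ht : t < L.length) (hq : ¬ q L[t] = true) :
    f q L (t + 1) = f q L t := by
  unfold f
  rw [take_succ_eq ht, List.filter_append, List.length_append]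
  simp [List.filter, hq]

lemma f_succ_ge {t : ℕ} (ht : L.length ≤ t) : f q L (t + 1) = f q L t := by
  unfold f
  rw [List.take_of_length_le ht, List.take_of_length_le (le_trans ht (Nat.le_succ t))]

lemma f_strict {t1 t2 : ℕ} (h : t1 < t2) (ht : t1 < L.length) (hq : q L[t1] = true) :
    f q L t1 < f q L t2 := by
  have h1 : f q L t1 < f q L (t1 + 1) := by
    rw [f_succ_pos ht hq]; exact Nat.lt_succ_self _
  exact lt_of_lt_of_le h1 (f_mono h)

lemma f_reflect {t1 t2 : ℕ} (h : f q L t1 < f q L t2) : t1 < t2 := by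
  by_contra hc
  exact absurd (f_mono (not_lt.mp hc)) (not_le.mpr h)

lemma getElem?_f {t : ℕ} (ht : t < L.length) (hq : q L[t] = true) :
    (L.filter q)[f q L t]? = some L[t] := by
  have hpre : (L.take (t+1)).filter q <+: L.filter q := (List.take_prefix _ _).filter q
  obtain ⟨r, hr⟩ := hpre
  have he : (L.take (t+1)).filter q = (L.take t).filter q ++ [L[t]] := by
    rw [take_succ_eq ht, List.filter_append]
    simp [List.filter, hq]
  rw [← hr, he, List.append_assoc]
  rw [List.getElem?_append_right (by simp [f])]
  simp [f]

lemma f_lt_length {t : ℕ} (ht : t < L.length) (hq : q L[t] = true) :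
    f q L t < (L.filter q).length := by
  by_contra hc
  have := getElem?_f ht hq
  rw [List.getElem?_eq_none (not_lt.mp hc)] at this
  exact absurd this (by simp)

lemma f_inj {t t' : ℕ} (ht : t < L.length) (ht' : t' < L.length) (hq : q L[t] = true)
    (hq' : q L[t'] = true) (h : f q L t = f q L t') : t = t' := by
  rcases lt_trichotomy t t' with hc | hc | hc
  · exact absurd h (Nat.ne_of_lt (f_strict hc ht hq))
  · exact hc
  · exact absurd h.symm (Nat.ne_of_lt (f_strict hc ht' hq'))

lemma f_surj_aux : ∀ n s, s < f q L n →
    ∃ t, t < n ∧ ∃ (ht : t < L.length), q L[t] = true ∧ f q L t = s := by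
  intro n
  induction n with
  | zero => intro s hs; simp [f] at hs
  | succ n ih =>
    intro s hs
    by_cases h1 : s < f q L n
    · obtain ⟨t, ht, h⟩ := ih s h1
      exact ⟨t, Nat.lt_succ_of_lt ht, h⟩
    · push_neg at h1
      by_cases hn : n < L.length
      · by_cases hq : q L[n] = true
        · refine ⟨n, Nat.lt_succ_self _, hn, hq, ?_⟩
          rw [f_succ_pos hn hq] at hs
          omega
        · rw [f_succ_neg' hn hq] at hs; omega
      · rw [f_succ_ge (not_lt.mp hn)] at hs; omega

lemma f_surj {s : ℕ} (hs : s < (L.filter q).length) :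
    ∃ t, ∃ (ht : t < L.length), q L[t] = true ∧ f q L t = s := by
  obtain ⟨t, _, h⟩ := f_surj_aux L.length s (by rwa [f_length])
  exact ⟨t, h⟩

end FIdx

def qd {k : ℕ} (j : Fin k) : Option (Fin k) → Bool := fun x => x ≠ some j

lemma qd_iff {k : ℕ} {j : Fin k} {x : Option (Fin k)} : qd j x = true ↔ x ≠ some j := by
  simp [qd]

lemma seqGet_lt {k : ℕ} {S : List (Option (Fin k))} {t : ℕ} (ht : t < S.length) :
    seqGet S t = S[t] := by
  simp [seqGet, List.getD_eq_getElem?_getD, List.getElem?_eq_getElem ht]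

lemma seqGet_f {k : ℕ} {S : List (Option (Fin k))} {j : Fin k} {t : ℕ}
    (ht : t < S.length) (hq : qd j S[t] = true) :
    seqGet (S.filter (qd j)) (FIdx.f (qd j) S t) = S[t] := by
  have := FIdx.getElem?_f ht hq
  simp [seqGet, List.getD_eq_getElem?_getD, this]

section Bridge
variable {k : ℕ} {S : List (Option (Fin k))} {j : Fin k}

lemma between_corr {t1 t2 : ℕ} (h12 : t1 < t2) (ht2 : t2 < S.length)
    (hne : seqGet S t1 ≠ some j) :
    between (S.filter (qd j)) (FIdx.f (qd j) S t1) (FIdx.f (qd j) S t2)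
      = (between S t1 t2).erase (some j) := by
  have ht1 : t1 < S.length := h12.trans ht2
  have hq1 : qd j S[t1] = true := qd_iff.mpr (by rwa [← seqGet_lt ht1])
  ext x
  simp only [between, Finset.mem_image, Finset.mem_erase, Finset.mem_Ioo]
  constructor
  · rintro ⟨s, ⟨hs1, hs2⟩, rfl⟩
    have hslen : s < (S.filter (qd j)).length :=
      lt_of_lt_of_le hs2 (FIdx.f_le_length t2)
    obtain ⟨t, ht, hqt, rfl⟩ := FIdx.f_surj hslen
    have hget := seqGet_f (j := j) ht hqt
    refine ⟨by rw [hget]; exact qd_iff.mp hqt,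
      t, ⟨FIdx.f_reflect hs1, FIdx.f_reflect hs2⟩, ?_⟩
    rw [hget, seqGet_lt ht]
  · rintro ⟨hxj, t, ⟨h1, h2⟩, rfl⟩
    have ht : t < S.length := h2.trans ht2
    have hqt : qd j S[t] = true := qd_iff.mpr (by rwa [← seqGet_lt ht])
    refine ⟨FIdx.f (qd j) S t, ⟨FIdx.f_strict h1 ht1 hq1, FIdx.f_strict h2 ht hqt⟩, ?_⟩
    rw [seqGet_f ht hqt, seqGet_lt ht]

lemma nbr_key {t1 t2 : ℕ} (h : IsNbr S t1 t2) (hne : seqGet S t1 ≠ some j) :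
    ∃ (ht1 : t1 < S.length) (ht2 : t2 < S.length),
      qd j S[t1] = true ∧ qd j S[t2] = true := by
  obtain ⟨h12, ht2, i, hi1, hi2, -⟩ := h
  have ht1 : t1 < S.length := h12.trans ht2
  refine ⟨ht1, ht2, qd_iff.mpr (by rwa [← seqGet_lt ht1]), qd_iff.mpr ?_⟩
  rw [← seqGet_lt ht2, hi2, ← hi1]
  exact hne

lemma nbr_forward {t1 t2 : ℕ} (h : IsNbr S t1 t2) (hne : seqGet S t1 ≠ some j) :
    IsNbr (S.filter (qd j)) (FIdx.f (qd j) S t1) (FIdx.f (qd j) S t2) := by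
  obtain ⟨ht1, ht2, hq1, hq2⟩ := nbr_key h hne
  obtain ⟨h12, -, i, hi1, hi2, hno⟩ := h
  refine ⟨FIdx.f_strict h12 ht1 hq1, FIdx.f_lt_length ht2 hq2, i, ?_, ?_, ?_⟩
  · rw [seqGet_f ht1 hq1, ← seqGet_lt ht1]; exact hi1
  · rw [seqGet_f ht2 hq2, ← seqGet_lt ht2]; exact hi2
  · intro s hs1 hs2 hcon
    have hslen : s < (S.filter (qd j)).length :=
      lt_of_lt_of_le hs2 (FIdx.f_le_length t2)
    obtain ⟨t, ht, hqt, rfl⟩ := FIdx.f_surj hslen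
    exact hno t (FIdx.f_reflect hs1) (FIdx.f_reflect hs2)
      (by rw [seqGet_lt ht, ← seqGet_f ht hqt]; exact hcon)

lemma nbr_backward {s1 s2 : ℕ} (h : IsNbr (S.filter (qd j)) s1 s2) :
    ∃ t1 t2, FIdx.f (qd j) S t1 = s1 ∧ FIdx.f (qd j) S t2 = s2 ∧
      IsNbr S t1 t2 ∧ seqGet S t1 ≠ some j := by
  obtain ⟨h12, hs2, i, hi1, hi2, hno⟩ := h
  obtain ⟨t2, ht2, hq2, rfl⟩ := FIdx.f_surj hs2
  obtain ⟨t1, ht1, hq1, rfl⟩ := FIdx.f_surj (lt_trans h12 hs2)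
  have h12' : t1 < t2 := FIdx.f_reflect h12
  have e1 : seqGet S t1 = some i := by
    rw [seqGet_lt ht1, ← seqGet_f (j := j) ht1 hq1]; exact hi1
  have e2 : seqGet S t2 = some i := by
    rw [seqGet_lt ht2, ← seqGet_f (j := j) ht2 hq2]; exact hi2
  have hij : (some i : Option (Fin k)) ≠ some j := by
    rw [← e1, seqGet_lt ht1]; exact qd_iff.mp hq1
  refine ⟨t1, t2, rfl, rfl, ⟨h12', ht2, i, e1, e2, ?_⟩, by rw [e1]; exact hij⟩
  intro t h1 h2 hcon
  have ht : t < S.length := h2.trans ht2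
  have hqt : qd j S[t] = true := qd_iff.mpr (by rw [← seqGet_lt ht, hcon]; exact hij)
  exact hno (FIdx.f (qd j) S t) (FIdx.f_strict h1 ht1 hq1) (FIdx.f_strict h2 ht hqt)
    (by rw [seqGet_f ht hqt, ← seqGet_lt ht]; exact hcon)

end Bridge

lemma inv_sub_one {b : ℝ} (hb : 2 ≤ b) : (b - 1)⁻¹ = b⁻¹ + (b * (b - 1))⁻¹ := by
  have h0 : b ≠ 0 := by linarith
  have h1 : b - 1 ≠ 0 := by
    intro h; rw [sub_eq_zero] at h; linarith
  field_simp
  ring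


/-- Deleting every occurrence of `j` changes the total weight by `input j - output j`. -/
theorem totalWeight_erase_symbol {k : ℕ} (S : List (Option (Fin k))) (j : Fin k)
    (hb2 : ∀ t1 t2, IsNbr S t1 t2 → seqGet S t1 ≠ some j → some j ∈ between S t1 t2 →
      2 ≤ (between S t1 t2).card) :
    totalWeight (S.filter (fun x => x ≠ some j)) =
      totalWeight S - output S j + inputW S j := by
  classical
  have hfil : S.filter (fun x => x ≠ some j) = S.filter (qd j) := rfl
  rw [hfil]
  set T : Finset (ℕ × ℕ) := (Finset.range S.length ×ˢ Finset.range S.length).filter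
      (fun p => IsNbr S p.1 p.2 ∧ seqGet S p.1 ≠ some j) with hT
  have memT : ∀ p : ℕ × ℕ, p ∈ T ↔ IsNbr S p.1 p.2 ∧ seqGet S p.1 ≠ some j := by
    intro p
    simp only [hT, Finset.mem_filter, Finset.mem_product, Finset.mem_range]
    constructor
    · tauto
    · rintro ⟨hnbr, hne⟩
      exact ⟨⟨hnbr.1.trans hnbr.2.1, hnbr.2.1⟩, hnbr, hne⟩
  -- Step 1: reindex
  have step1 : totalWeight (S.filter (qd j))
      = ∑ p ∈ T, wt (S.filter (qd j)) (FIdx.f (qd j) S p.1) (FIdx.f (qd j) S p.2) := by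
    rw [totalWeight]
    refine (Finset.sum_bij
      (fun (p : ℕ × ℕ) (_ : p ∈ T) => (FIdx.f (qd j) S p.1, FIdx.f (qd j) S p.2))
      ?_ ?_ ?_ ?_).symm
    · intro p hp
      rw [memT] at hp
      obtain ⟨hnbr, hne⟩ := hp
      obtain ⟨ht1, ht2, hq1, hq2⟩ := nbr_key hnbr hne
      have hf2 := FIdx.f_lt_length ht2 hq2
      have hnbr' := nbr_forward hnbr hne
      simp only [Finset.mem_filter, Finset.mem_product, Finset.mem_range]
      exact ⟨⟨lt_trans hnbr'.1 hf2, hf2⟩, hnbr'⟩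
    · intro a ha b hb hab
      rw [memT] at ha hb
      obtain ⟨ha1, ha2, haq1, haq2⟩ := nbr_key ha.1 ha.2
      obtain ⟨hb1, hb2', hbq1, hbq2⟩ := nbr_key hb.1 hb.2
      have h1 := congrArg Prod.fst hab
      have h2 := congrArg Prod.snd hab
      exact Prod.ext (FIdx.f_inj ha1 hb1 haq1 hbq1 h1) (FIdx.f_inj ha2 hb2' haq2 hbq2 h2)
    · intro p' hp'
      simp only [Finset.mem_filter, Finset.mem_product, Finset.mem_range] at hp'
      obtain ⟨t1, t2, he1, he2, hnbr, hne⟩ := nbr_backward hp'.2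
      exact ⟨(t1, t2), (memT _).mpr ⟨hnbr, hne⟩, by simp [he1, he2]⟩
    · intro p hp; rfl
  -- per-element weight computations
  have wt_not : ∀ p ∈ T.filter (fun p => ¬ some j ∈ between S p.1 p.2),
      wt (S.filter (qd j)) (FIdx.f (qd j) S p.1) (FIdx.f (qd j) S p.2) = wt S p.1 p.2 := by
    intro p hp
    rw [Finset.mem_filter] at hp
    obtain ⟨hpT, hnotin⟩ := hp
    rw [memT] at hpT
    obtain ⟨hnbr, hne⟩ := hpT
    rw [wt, between_corr hnbr.1 hnbr.2.1 hne, Finset.erase_eq_of_notMem hnotin]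
    rfl
  have wt_yes : ∀ p ∈ T.filter (fun p => some j ∈ between S p.1 p.2),
      wt (S.filter (qd j)) (FIdx.f (qd j) S p.1) (FIdx.f (qd j) S p.2)
        = wt S p.1 p.2
          + (((between S p.1 p.2).card : ℝ) * (((between S p.1 p.2).card : ℝ) - 1))⁻¹ := by
    intro p hp
    rw [Finset.mem_filter] at hp
    obtain ⟨hpT, hin⟩ := hp
    rw [memT] at hpT
    obtain ⟨hnbr, hne⟩ := hpT
    have hb := hb2 p.1 p.2 hnbr hne hin
    rw [wt, between_corr hnbr.1 hnbr.2.1 hne, Finset.card_erase_of_mem hin]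
    have hcast : (((between S p.1 p.2).card - 1 : ℕ) : ℝ)
        = ((between S p.1 p.2).card : ℝ) - 1 := by
      have h1 : 1 ≤ (between S p.1 p.2).card := le_trans one_le_two hb
      rw [Nat.cast_sub h1, Nat.cast_one]
    rw [hcast, wt]
    exact inv_sub_one (by exact_mod_cast hb)
  -- sums
  have A := Finset.sum_filter_add_sum_filter_not T (fun p => some j ∈ between S p.1 p.2)
      (fun p => wt (S.filter (qd j)) (FIdx.f (qd j) S p.1) (FIdx.f (qd j) S p.2))
  have B := Finset.sum_filter_add_sum_filter_not T (fun p => some j ∈ between S p.1 p.2)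
      (fun p => wt S p.1 p.2)
  have e1 : ∑ p ∈ T.filter (fun p => some j ∈ between S p.1 p.2),
        wt (S.filter (qd j)) (FIdx.f (qd j) S p.1) (FIdx.f (qd j) S p.2)
      = ∑ p ∈ T.filter (fun p => some j ∈ between S p.1 p.2),
          (wt S p.1 p.2
            + (((between S p.1 p.2).card : ℝ) * (((between S p.1 p.2).card : ℝ) - 1))⁻¹) :=
    Finset.sum_congr rfl wt_yes
  have e2 : ∑ p ∈ T.filter (fun p => ¬ some j ∈ between S p.1 p.2),
        wt (S.filter (qd j)) (FIdx.f (qd j) S p.1) (FIdx.f (qd j) S p.2)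
      = ∑ p ∈ T.filter (fun p => ¬ some j ∈ between S p.1 p.2), wt S p.1 p.2 :=
    Finset.sum_congr rfl wt_not
  rw [Finset.sum_add_distrib] at e1
  have hinput : inputW S j
      = ∑ p ∈ T.filter (fun p => some j ∈ between S p.1 p.2),
          (((between S p.1 p.2).card : ℝ) * (((between S p.1 p.2).card : ℝ) - 1))⁻¹ := by
    rw [inputW, hT, Finset.filter_filter]
    apply Finset.sum_congr _ (fun _ _ => rfl)
    ext p
    simp only [Finset.mem_filter]
    tauto
  have hsplit2 : totalWeight S = output S j + ∑ p ∈ T, wt S p.1 p.2 := by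
    rw [totalWeight, output]
    rw [← Finset.sum_filter_add_sum_filter_not
        ((Finset.range S.length ×ˢ Finset.range S.length).filter (fun p => IsNbr S p.1 p.2))
        (fun p => seqGet S p.1 = some j) (fun p => wt S p.1 p.2)]
    congr 1
    · apply Finset.sum_congr _ (fun _ _ => rfl)
      ext p
      simp only [Finset.mem_filter]
      simp only [NbrOf]
      tauto
    · apply Finset.sum_congr _ (fun _ _ => rfl)
      rw [Finset.filter_filter, hT]
  rw [step1, hsplit2]
  linarith [A, B, e1, e2, hinput]
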